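/- (Weighted exchangeability sampling identity.) Let $Z_1,\dots,Z_n$ be i.i.d.\ from $P$ on a measurable space and $Z_{n+1}$ independent from $Q$ with $dQ/dP(z) = w(z)$ for a positive measurable $w$. Then conditionally on the unordered multiset $[Z_1,\dots,Z_{n+1}] = [z_1,\dots,z_{n+1}]$, the conditional distribution of $Z_{n+1}$ is $\sum_{i=1}^{n+1} \frac{w(z_i)}{\sum_{j=1}^{n+1} w(z_j)}\,\delta_{z_i}$. -/

import Mathlib

open MeasureTheory ProbabilityTheory
open scoped Classical

/-- The σ-algebra on multisets of size `n+1` induced by the map sending a tuple to its multiset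
of values: a set of multisets is measurable iff its preimage under `(v : Fin (n+1) → α) ↦ ⟦v⟧`
is measurable. -/
noncomputable def multisetMS (α : Type*) [MeasurableSpace α] (n : ℕ) :
    MeasurableSpace (Multiset α) :=
  MeasurableSpace.map (fun v : Fin (n + 1) → α => (List.ofFn v : Multiset α)) inferInstance

section Aux

variable {α : Type*} [MeasurableSpace α]

/-- The multiset of values of a tuple is invariant under permuting the tuple. -/
lemma aux_ofFn_perm {n : ℕ} (v : Fin n → α) (τ : Equiv.Perm (Fin n)) :
    ((List.ofFn (fun i => v (τ i)) : List α) : Multiset α) = (List.ofFn v : Multiset α) := by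
  have h1 : ((List.ofFn (fun i => v (τ i)) : List α) : Multiset α)
      = Multiset.map v (Multiset.map τ ((List.finRange n : List (Fin n)) : Multiset (Fin n))) := by
    simp [List.ofFn_eq_map, Multiset.map_coe, Multiset.map_map, Function.comp_def]
  have h2 : ((List.ofFn v : List α) : Multiset α)
      = Multiset.map v ((List.finRange n : List (Fin n)) : Multiset (Fin n)) := by
    simp [List.ofFn_eq_map, Multiset.map_coe]
  rw [h1, h2]
  congr 1
  refine (Multiset.Nodup.ext ?_ ?_).2 (fun a => ?_)
  · exact (Multiset.coe_nodup.2 (List.nodup_finRange n)).map τ.injective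
  · exact Multiset.coe_nodup.2 (List.nodup_finRange n)
  · simp only [Multiset.mem_map, Multiset.mem_coe, List.mem_finRange, true_and]
    exact ⟨fun _ => trivial, fun _ => ⟨τ.symm a, by simp⟩⟩

/-- Product of `n+1` copies of `P` with the last one replaced by `P.withDensity f` equals
the plain product with density `f` of the last coordinate. -/
lemma aux_pi_withDensity (n : ℕ) (P Q : Measure α) [IsProbabilityMeasure P]
    [IsProbabilityMeasure Q] (f : α → ENNReal) (hf : Measurable f)
    (hQ : Q = P.withDensity f) :
    Measure.pi (fun i : Fin (n + 1) => if i = Fin.last n then Q else P)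
      = (Measure.pi fun _ : Fin (n + 1) => P).withDensity
          (fun x => f (x (Fin.last n))) := by
  haveI : ∀ i : Fin (n + 1),
      SigmaFinite ((fun i : Fin (n + 1) => if i = Fin.last n then Q else P) i) := by
    intro i
    dsimp only
    split <;> infer_instance
  refine Measure.pi_eq fun s hs => ?_
  rw [withDensity_apply _ (MeasurableSet.univ_pi hs)]
  have hmp := measurePreserving_piFinSuccAbove (fun _ : Fin (n + 1) => P) (Fin.last n)
  set e := MeasurableEquiv.piFinSuccAbove (fun _ : Fin (n + 1) => α) (Fin.last n) with he
  set g : α × (Fin n → α) → ENNReal := fun p =>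
    Set.indicator (s (Fin.last n)) f p.1 *
      Set.indicator (Set.univ.pi fun j => s ((Fin.last n).succAbove j)) 1 p.2 with hg
  have key : ∫⁻ x in Set.univ.pi s, f (x (Fin.last n)) ∂(Measure.pi fun _ => P)
      = ∫⁻ x, g (e x) ∂(Measure.pi fun _ => P) := by
    rw [← lintegral_indicator (MeasurableSet.univ_pi hs)]
    congr 1
    funext x
    have hex : e x = (x (Fin.last n), fun j => x ((Fin.last n).succAbove j)) := rfl
    have hx : (x ∈ Set.univ.pi s) ↔ (x (Fin.last n) ∈ s (Fin.last n) ∧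
        (fun j => x ((Fin.last n).succAbove j)) ∈
          Set.univ.pi fun j => s ((Fin.last n).succAbove j)) := by
      simp only [Set.mem_univ_pi]
      exact Fin.forall_iff_succAbove (Fin.last n)
    rw [hex, hg]
    simp only [Set.indicator_apply]
    by_cases h1 : x (Fin.last n) ∈ s (Fin.last n) <;>
      by_cases h2 : (fun j => x ((Fin.last n).succAbove j)) ∈
          Set.univ.pi fun j => s ((Fin.last n).succAbove j) <;>
      simp [hx, h1, h2]
  have hgmeas : Measurable g := by
    apply Measurable.mul
    · exact (hf.indicator (hs _)).comp measurable_fst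
    · exact (measurable_one.indicator
        (MeasurableSet.univ_pi fun j => hs _)).comp measurable_snd
  rw [key, hmp.lintegral_comp hgmeas]
  rw [hg]
  rw [lintegral_prod_mul ((hf.indicator (hs _)).aemeasurable)
    ((measurable_one.indicator (MeasurableSet.univ_pi fun j => hs _)).aemeasurable)]
  rw [lintegral_indicator (hs _), lintegral_indicator_one
    (MeasurableSet.univ_pi fun j => hs _)]
  rw [← withDensity_apply _ (hs _), ← hQ, Measure.pi_pi]
  rw [Fin.prod_univ_castSucc
    (f := fun i => (if i = Fin.last n then Q else P) (s i))]
  have hne : ∀ j : Fin n, (j.castSucc : Fin (n + 1)) ≠ Fin.last n :=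
    fun j => (Fin.castSucc_lt_last j).ne
  simp only [if_pos rfl, hne, if_false, if_neg (hne _)]
  rw [mul_comm]
  congr 1
  · congr 1
    funext j
    rw [Fin.succAbove_last]

end Aux

/-- Weighted exchangeability sampling identity: if `Z_1,…,Z_n` are i.i.d. from `P` and `Z_{n+1}`
is an independent draw from `Q` with `dQ/dP = w`, then conditionally on the unordered multiset
`[Z_1,…,Z_{n+1}]`, the conditional distribution of `Z_{n+1}` is the weighted mixture
`∑ᵢ w(zᵢ)δ_{zᵢ} / ∑ⱼ w(zⱼ)`; stated via conditional expectations of indicators of measurable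
sets `A`. -/
theorem stmt4 {Ω α : Type*} [MeasurableSpace Ω] [MeasurableSpace α]
    (P0 : Measure Ω) [IsProbabilityMeasure P0]
    (P : Measure α) [IsProbabilityMeasure P]
    (w : α → ℝ) (hw : ∀ z, 0 < w z) (hwm : Measurable w)
    (n : ℕ) (Z : Fin (n + 1) → Ω → α) (hZm : ∀ i, Measurable (Z i))
    (hPlaw : ∀ i : Fin n, Measure.map (Z i.castSucc) P0 = P)
    (hQlaw : Measure.map (Z (Fin.last n)) P0 = P.withDensity (fun z => ENNReal.ofReal (w z)))
    (hQprob : IsProbabilityMeasure (P.withDensity (fun z => ENNReal.ofReal (w z))))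
    (hindep : iIndepFun Z P0) :
    ∀ A : Set α, MeasurableSet A →
      (P0[fun ω => Set.indicator A (fun _ => (1 : ℝ)) (Z (Fin.last n) ω) |
          MeasurableSpace.comap (fun ω => (List.ofFn (fun i => Z i ω) : Multiset α))
            (multisetMS α n)])
        =ᵐ[P0]
      fun ω => (∑ i, w (Z i ω) * (if Z i ω ∈ A then (1 : ℝ) else 0)) / (∑ i, w (Z i ω)) := by
  intro A hA
  haveI := hQprob
  -- basic notation
  set Q : Measure α := P.withDensity (fun z => ENNReal.ofReal (w z)) with hQdef
  set ind : α → ℝ := fun z => if z ∈ A then (1 : ℝ) else 0 with hind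
  have hindm : Measurable ind := Measurable.ite hA measurable_const measurable_const
  have hind_nonneg : ∀ z, 0 ≤ ind z := by
    intro z; by_cases h : z ∈ A <;> simp [hind, h]
  have hind_le1 : ∀ z, ind z ≤ 1 := by
    intro z; by_cases h : z ∈ A <;> simp [hind, h]
  set V : Ω → (Fin (n + 1) → α) := fun ω i => Z i ω with hV
  have hVm : Measurable V := measurable_pi_lambda _ hZm
  set T : (Fin (n + 1) → α) → Multiset α := fun v => (List.ofFn v : Multiset α) with hT
  have hTm : @Measurable _ _ _ (multisetMS α n) T := fun s hs => hs
  have hmfun_meas : @Measurable Ω (Multiset α) _ (multisetMS α n)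
      (fun ω => (List.ofFn (fun i => Z i ω) : Multiset α)) := hTm.comp hVm
  have hm : MeasurableSpace.comap (fun ω => (List.ofFn (fun i => Z i ω) : Multiset α))
      (multisetMS α n) ≤ _ := hmfun_meas.comap_le
  haveI : SigmaFinite (P0.trim hm) := by
    haveI := isFiniteMeasure_trim hm (μ := P0)
    infer_instance
  -- the symmetric function on tuples
  set num : (Fin (n + 1) → α) → ℝ := fun x => ∑ i, w (x i) * ind (x i) with hnum
  set den : (Fin (n + 1) → α) → ℝ := fun x => ∑ i, w (x i) with hden
  set G' : (Fin (n + 1) → α) → ℝ := fun x => num x / den x with hG'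
  have hden_pos : ∀ x, 0 < den x :=
    fun x => Finset.sum_pos (fun i _ => hw _) Finset.univ_nonempty
  have hnum_nonneg : ∀ x, 0 ≤ num x :=
    fun x => Finset.sum_nonneg fun i _ => mul_nonneg (hw _).le (hind_nonneg _)
  have hnum_le : ∀ x, num x ≤ den x :=
    fun x => Finset.sum_le_sum fun i _ =>
      mul_le_of_le_one_right (hw _).le (hind_le1 _)
  have hG'_nonneg : ∀ x, 0 ≤ G' x := fun x => div_nonneg (hnum_nonneg x) (hden_pos x).le
  have hG'_le1 : ∀ x, G' x ≤ 1 := fun x => (div_le_one (hden_pos x)).2 (hnum_le x)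
  have hnumm : Measurable num := Finset.measurable_sum _ fun i _ =>
    (hwm.comp (measurable_pi_apply i)).mul (hindm.comp (measurable_pi_apply i))
  have hdenm : Measurable den := Finset.measurable_sum _ fun i _ =>
    hwm.comp (measurable_pi_apply i)
  have hG'm : Measurable G' := hnumm.div hdenm
  set F : (Fin (n + 1) → α) → ℝ := fun x => ind (x (Fin.last n)) with hF
  have hFm : Measurable F := hindm.comp (measurable_pi_apply _)
  -- the statement's two functions
  set f : Ω → ℝ := fun ω => Set.indicator A (fun _ => (1 : ℝ)) (Z (Fin.last n) ω) with hfdef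
  set g : Ω → ℝ := fun ω =>
    (∑ i, w (Z i ω) * (if Z i ω ∈ A then (1 : ℝ) else 0)) / (∑ i, w (Z i ω)) with hgdef
  have hfF : f = fun ω => F (V ω) := by
    funext ω
    simp [hfdef, hF, hind, hV, Set.indicator_apply]
  have hgG : g = fun ω => G' (V ω) := by
    funext ω
    simp [hgdef, hG', hnum, hden, hind, hV]
  have hfm : Measurable f := by rw [hfF]; exact hFm.comp hVm
  have hgm0 : Measurable g := by rw [hgG]; exact hG'm.comp hVm
  have hf_int : Integrable f P0 := by
    refine Integrable.mono' (integrable_const (1 : ℝ)) hfm.aestronglyMeasurable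
      (Filter.Eventually.of_forall fun ω => ?_)
    rw [hfF]
    rw [Real.norm_eq_abs, abs_of_nonneg (hind_nonneg _)]
    exact hind_le1 _
  have hg_int : Integrable g P0 := by
    refine Integrable.mono' (integrable_const (1 : ℝ)) hgm0.aestronglyMeasurable
      (Filter.Eventually.of_forall fun ω => ?_)
    rw [hgG]
    rw [Real.norm_eq_abs, abs_of_nonneg (hG'_nonneg _)]
    exact hG'_le1 _
  -- measurability of g with respect to the multiset σ-algebra
  have hgm' : AEStronglyMeasurable[MeasurableSpace.comap
      (fun ω => (List.ofFn (fun i => Z i ω) : Multiset α)) (multisetMS α n)] g P0 := by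
    set Gm : Multiset α → ℝ := fun s =>
      (Multiset.map (fun z => w z * ind z) s).sum / (Multiset.map w s).sum with hGm
    have hcomp : ∀ v : Fin (n + 1) → α, Gm (T v) = G' v := by
      intro v
      simp [hGm, hT, hG', hnum, hden, Multiset.map_coe, Multiset.sum_coe,
        List.map_ofFn, List.sum_ofFn, Function.comp_def, Fin.sum_univ_succ]
    have hGm_meas : @Measurable (Multiset α) ℝ (multisetMS α n) _ Gm := by
      intro s hs
      show MeasurableSet (T ⁻¹' (Gm ⁻¹' s))
      have : T ⁻¹' (Gm ⁻¹' s) = G' ⁻¹' s := by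
        ext v
        simp only [Set.mem_preimage, hcomp]
      rw [this]
      exact hG'm hs
    have h1 : @Measurable Ω (Multiset α)
        (MeasurableSpace.comap (fun ω => (List.ofFn (fun i => Z i ω) : Multiset α))
          (multisetMS α n)) (multisetMS α n)
        (fun ω => (List.ofFn (fun i => Z i ω) : Multiset α)) := fun s hs => ⟨s, hs, rfl⟩
    have h2 := hGm_meas.comp h1
    have hgeq : g = fun ω => Gm ((List.ofFn (fun i => Z i ω) : Multiset α)) := by
      rw [hgG]
      funext ω
      exact (hcomp (V ω)).symm
    rw [hgeq]
    exact (Measurable.stronglyMeasurable h2).aestronglyMeasurable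
  -- the joint law
  set π : Measure (Fin (n + 1) → α) := Measure.pi (fun _ => P) with hπ
  set ν : Fin (n + 1) → Measure α := fun i => if i = Fin.last n then Q else P with hν
  haveI : ∀ i, SigmaFinite (ν i) := by
    intro i
    rw [hν]
    dsimp only
    split <;> infer_instance
  have hlaw : Measure.map V P0 = Measure.pi ν := by
    refine (Measure.pi_eq fun s hs' => ?_).symm
    rw [Measure.map_apply hVm (MeasurableSet.univ_pi hs')]
    have hpre : V ⁻¹' (Set.univ.pi s) = ⋂ i, Z i ⁻¹' (s i) := by
      ext ω
      simp [hV, Set.mem_univ_pi]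
    rw [hpre, hindep.meas_iInter (fun i => ⟨s i, hs' i, rfl⟩)]
    refine Finset.prod_congr rfl fun i _ => ?_
    rw [← Measure.map_apply (hZm i) (hs' i)]
    by_cases h : i = Fin.last n
    · subst h
      rw [hQlaw, hν]
      simp
    · obtain ⟨j, rfl⟩ : ∃ j : Fin n, i = j.castSucc :=
        ⟨i.castPred h, (Fin.castSucc_castPred i h).symm⟩
      rw [hPlaw j, hν]
      simp [h]
  have hpi : Measure.pi ν = π.withDensity (fun x => ENNReal.ofReal (w (x (Fin.last n)))) := by
    rw [hν, hπ]
    exact aux_pi_withDensity n P Q (fun z => ENNReal.ofReal (w z))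
      (hwm.ennreal_ofReal) hQdef
  -- transfer of set integrals
  set φ : (Fin (n + 1) → α) → NNReal := fun x => (w (x (Fin.last n))).toNNReal with hφ
  have hφm : Measurable φ := measurable_real_toNNReal.comp (hwm.comp (measurable_pi_apply _))
  -- integrability of the weight functions
  have hwlast_int : Integrable (fun x => w (x (Fin.last n))) π := by
    refine ⟨(hwm.comp (measurable_pi_apply _)).aestronglyMeasurable, ?_⟩
    rw [hasFiniteIntegral_iff_norm]
    have heq : ∫⁻ x, ENNReal.ofReal ‖w (x (Fin.last n))‖ ∂π
        = ∫⁻ x, ENNReal.ofReal (w (x (Fin.last n))) ∂π := by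
      refine lintegral_congr fun x => ?_
      rw [Real.norm_eq_abs, abs_of_pos (hw _)]
    rw [heq]
    have : ∫⁻ x, ENNReal.ofReal (w (x (Fin.last n))) ∂π
        = (π.withDensity (fun x => ENNReal.ofReal (w (x (Fin.last n))))) Set.univ := by
      rw [withDensity_apply _ MeasurableSet.univ, setLIntegral_univ]
    rw [this, ← hpi, Measure.pi_univ]
    have : ∀ i : Fin (n + 1), ν i Set.univ = 1 := by
      intro i
      rw [hν]
      dsimp only
      split <;> simp
    simp [this]
  -- swap equivalences
  have hswap : ∀ i : Fin (n + 1), ∃ e : (Fin (n + 1) → α) ≃ᵐ (Fin (n + 1) → α),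
      MeasurePreserving e π π ∧
      ∀ x : Fin (n + 1) → α, e x = fun j => x ((Equiv.swap i (Fin.last n)) j) := by
    intro i
    refine ⟨MeasurableEquiv.piCongrLeft (fun _ : Fin (n + 1) => α) (Equiv.swap i (Fin.last n)),
      measurePreserving_piCongrLeft (fun _ => P) _, fun x => ?_⟩
    funext j
    have h1 := MeasurableEquiv.piCongrLeft_apply_apply (β := fun _ : Fin (n + 1) => α)
      (Equiv.swap i (Fin.last n)) x ((Equiv.swap i (Fin.last n)).symm j)
    rw [Equiv.apply_symm_apply] at h1
    rw [h1, Equiv.symm_swap]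
  have hperm : ∀ (i : Fin (n + 1)) (H : (Fin (n + 1) → α) → ℝ)
      (B : Set (Fin (n + 1) → α)), MeasurableSet B →
      (∀ x, (fun j => x ((Equiv.swap i (Fin.last n)) j)) ∈ B ↔ x ∈ B) →
      ∫ x in B, H x ∂π
        = ∫ x in B, H (fun j => x ((Equiv.swap i (Fin.last n)) j)) ∂π := by
    intro i H B hB hBsym
    obtain ⟨e, hmp, he⟩ := hswap i
    have hpre : e ⁻¹' B = B := by
      ext x
      simp only [Set.mem_preimage]
      rw [he x]
      exact hBsym x
    calc ∫ x in B, H x ∂π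
        = ∫ x in e ⁻¹' B, H (e x) ∂π := by
          rw [hmp.setIntegral_preimage_emb e.measurableEmbedding H B]
      _ = ∫ x in B, H (fun j => x ((Equiv.swap i (Fin.last n)) j)) ∂π := by
          rw [hpre]
          exact integral_congr_ae (Filter.Eventually.of_forall fun x => by simp only [he])
  have hw_int : ∀ i : Fin (n + 1), Integrable (fun x => w (x i)) π := by
    intro i
    obtain ⟨e, hmp, he⟩ := hswap i
    have hcomp : ((fun x : Fin (n + 1) → α => w (x (Fin.last n))) ∘ e)
        = fun x => w (x i) := by
      funext x
      simp only [Function.comp_apply, he x]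
      rw [Equiv.swap_apply_right]
    have h2 : Integrable ((fun x : Fin (n + 1) → α => w (x (Fin.last n))) ∘ e) π :=
      (hmp.integrable_comp
        (hwm.comp (measurable_pi_apply _)).aestronglyMeasurable).2 hwlast_int
    exact hcomp ▸ h2
  -- conclude via the characterization of conditional expectation
  refine (ae_eq_condExp_of_forall_setIntegral_eq hm hf_int
    (fun s _ _ => hg_int.integrableOn) (fun s hs hμs => ?_) hgm').symm
  obtain ⟨t, ht, rfl⟩ := hs
  set B : Set (Fin (n + 1) → α) := T ⁻¹' t with hBdef
  have hBmeas : MeasurableSet B := ht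
  have hBsym : ∀ (i : Fin (n + 1)) (x : Fin (n + 1) → α),
      ((fun j => x ((Equiv.swap i (Fin.last n)) j)) ∈ B ↔ x ∈ B) := by
    intro i x
    simp only [hBdef, Set.mem_preimage]
    have hTeq : T (fun j => x ((Equiv.swap i (Fin.last n)) j)) = T x := aux_ofFn_perm x _
    rw [hTeq]
  have hVB : (fun ω => (List.ofFn (fun i => Z i ω) : Multiset α)) ⁻¹' t = V ⁻¹' B := rfl
  -- integrability on B
  have hJint : ∀ i : Fin (n + 1), IntegrableOn (fun x => w (x i) * ind (x i)) B π := by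
    intro i
    refine (Integrable.mono' (hw_int i)
      (((hwm.comp (measurable_pi_apply i)).mul
        (hindm.comp (measurable_pi_apply i))).aestronglyMeasurable)
      (Filter.Eventually.of_forall fun x => ?_)).integrableOn
    simp only [Real.norm_eq_abs, Pi.mul_apply, Function.comp_apply, abs_mul]
    rw [abs_of_pos (hw _), abs_of_nonneg (hind_nonneg _)]
    exact mul_le_of_le_one_right (hw _).le (hind_le1 _)
  have hKint : ∀ i : Fin (n + 1), IntegrableOn (fun x => w (x i) * G' x) B π := by
    intro i
    refine (Integrable.mono' (hw_int i)
      (((hwm.comp (measurable_pi_apply i)).mul hG'm).aestronglyMeasurable)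
      (Filter.Eventually.of_forall fun x => ?_)).integrableOn
    simp only [Real.norm_eq_abs, Pi.mul_apply, Function.comp_apply, abs_mul]
    rw [abs_of_pos (hw _), abs_of_nonneg (hG'_nonneg _)]
    exact mul_le_of_le_one_right (hw _).le (hG'_le1 _)
  -- transfer of set integrals from P0 to π
  have hmap : ∀ H : (Fin (n + 1) → α) → ℝ, Measurable H →
      ∫ ω in V ⁻¹' B, H (V ω) ∂P0 = ∫ x in B, w (x (Fin.last n)) * H x ∂π := by
    intro H hH
    have h1 : ∫ x in B, H x ∂(Measure.map V P0) = ∫ ω in V ⁻¹' B, H (V ω) ∂P0 :=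
      setIntegral_map hBmeas hH.aestronglyMeasurable hVm.aemeasurable
    rw [← h1, hlaw, hpi]
    have h3 : (fun x : Fin (n + 1) → α => ENNReal.ofReal (w (x (Fin.last n))))
        = fun x => ((φ x : NNReal) : ENNReal) := rfl
    rw [h3, setIntegral_withDensity_eq_setIntegral_smul hφm H hBmeas]
    refine integral_congr_ae (Filter.Eventually.of_forall fun x => ?_)
    show φ x • H x = w (x (Fin.last n)) * H x
    rw [NNReal.smul_def,
      show ((φ x : NNReal) : ℝ) = w (x (Fin.last n)) from Real.coe_toNNReal _ (hw _).le,
      smul_eq_mul]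
  -- the symmetry argument
  have hJ : ∀ i : Fin (n + 1), ∫ x in B, w (x i) * ind (x i) ∂π
      = ∫ x in B, w (x (Fin.last n)) * F x ∂π := by
    intro i
    rw [hperm i (fun x => w (x i) * ind (x i)) B hBmeas (hBsym i)]
    refine integral_congr_ae (Filter.Eventually.of_forall fun x => ?_)
    simp only [hF, Equiv.swap_apply_left]
  have hK : ∀ i : Fin (n + 1), ∫ x in B, w (x i) * G' x ∂π
      = ∫ x in B, w (x (Fin.last n)) * G' x ∂π := by
    intro i
    rw [hperm i (fun x => w (x i) * G' x) B hBmeas (hBsym i)]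
    refine integral_congr_ae (Filter.Eventually.of_forall fun x => ?_)
    have hGinv : G' (fun j => x ((Equiv.swap i (Fin.last n)) j)) = G' x := by
      rw [hG']
      dsimp only
      rw [hnum, hden]
      dsimp only
      rw [Equiv.sum_comp (Equiv.swap i (Fin.last n)) (fun j => w (x j) * ind (x j)),
        Equiv.sum_comp (Equiv.swap i (Fin.last n)) (fun j => w (x j))]
    simp only [hGinv, Equiv.swap_apply_left]
  have hsum : ∑ i : Fin (n + 1), ∫ x in B, w (x i) * ind (x i) ∂π
      = ∑ i : Fin (n + 1), ∫ x in B, w (x i) * G' x ∂π := by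
    rw [← integral_finset_sum Finset.univ (fun i _ => hJint i),
      ← integral_finset_sum Finset.univ (fun i _ => hKint i)]
    refine integral_congr_ae (Filter.Eventually.of_forall fun x => ?_)
    show (∑ i, w (x i) * ind (x i)) = ∑ i, w (x i) * G' x
    rw [← Finset.sum_mul]
    show num x = den x * G' x
    rw [hG']
    exact (mul_div_cancel₀ (num x) (hden_pos x).ne').symm
  have hJlast : ∑ i : Fin (n + 1), ∫ x in B, w (x i) * ind (x i) ∂π
      = (n + 1 : ℝ) * ∫ x in B, w (x (Fin.last n)) * F x ∂π := by
    rw [Finset.sum_congr rfl (fun i _ => hJ i), Finset.sum_const, Finset.card_univ,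
      Fintype.card_fin, nsmul_eq_mul]
    push_cast
    ring
  have hKlast : ∑ i : Fin (n + 1), ∫ x in B, w (x i) * G' x ∂π
      = (n + 1 : ℝ) * ∫ x in B, w (x (Fin.last n)) * G' x ∂π := by
    rw [Finset.sum_congr rfl (fun i _ => hK i), Finset.sum_const, Finset.card_univ,
      Fintype.card_fin, nsmul_eq_mul]
    push_cast
    ring
  have hfinal : ∫ x in B, w (x (Fin.last n)) * G' x ∂π
      = ∫ x in B, w (x (Fin.last n)) * F x ∂π := by
    have h4 : (n + 1 : ℝ) * ∫ x in B, w (x (Fin.last n)) * F x ∂π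
        = (n + 1 : ℝ) * ∫ x in B, w (x (Fin.last n)) * G' x ∂π := by
      rw [← hJlast, ← hKlast, hsum]
    have hne : (n + 1 : ℝ) ≠ 0 := by positivity
    exact (mul_left_cancel₀ hne h4).symm
  calc ∫ x in (fun ω => (List.ofFn (fun i => Z i ω) : Multiset α)) ⁻¹' t, g x ∂P0
      = ∫ ω in V ⁻¹' B, G' (V ω) ∂P0 := by rw [hVB, hgG]
    _ = ∫ x in B, w (x (Fin.last n)) * G' x ∂π := hmap G' hG'm
    _ = ∫ x in B, w (x (Fin.last n)) * F x ∂π := hfinal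
    _ = ∫ ω in V ⁻¹' B, F (V ω) ∂P0 := (hmap F hFm).symm
    _ = ∫ x in (fun ω => (List.ofFn (fun i => Z i ω) : Multiset α)) ⁻¹' t, f x ∂P0 := by
        rw [hVB, hfF]
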